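/- Let A ∈ ℝ^{m×n} and let A = UΣVᵀ be a singular value decomposition: U ∈ ℝ^{m×m} and V ∈ ℝ^{n×n} are orthogonal and Σ ∈ ℝ^{m×n} satisfies Σ(i,i) = σ_i(A) for 1 ≤ i ≤ min(m,n) and Σ(i,j) = 0 for i ≠ j. Fix integers μ and ℓ with 1 ≤ μ < n and μ ≤ ℓ. Let Ω ∈ ℝ^{n×ℓ}, and write VᵀΩ = [H; R₂] where H ∈ ℝ^{μ×ℓ} consists of the first μ rows and R₂ ∈ ℝ^{(n−μ)×ℓ} of the remaining rows. Suppose G ∈ ℝ^{ℓ×μ} satisfies HG = I_μ, and define F = [G | 0_{ℓ×(n−μ)}] · Vᵀ ∈ ℝ^{ℓ×n}. Then ‖F‖₂ = ‖G‖₂ and ‖AΩF − A‖_F ≤ (1 + ‖R₂‖₂‖G‖₂) · Δ_{μ+1}(A). -/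

import Mathlib

open Matrix
open scoped BigOperators

noncomputable section

/-- Frobenius norm of a real matrix. -/
def frobNorm {m n : ℕ} (A : Matrix (Fin m) (Fin n) ℝ) : ℝ :=
  Real.sqrt (∑ i, ∑ j, A i j ^ 2)

/-- Nonincreasing rearrangement of a finite tuple of reals. -/
def sortedDesc {n : ℕ} (f : Fin n → ℝ) : Fin n → ℝ :=
  fun k => - ((fun i => - f i) ∘ Tuple.sort (fun i => - f i)) k

/-- `sval A k` is the `(k+1)`-st largest singular value of `A` (i.e. 0-based index `k`),
the square root of the `(k+1)`-st largest eigenvalue of `AᵀA`; it is `0` for `k ≥ n`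
(in particular for `k ≥ min m n`). -/
def sval {m n : ℕ} (A : Matrix (Fin m) (Fin n) ℝ) (k : ℕ) : ℝ :=
  if h : k < n then
    Real.sqrt (sortedDesc (Matrix.isHermitian_conjTranspose_mul_self A).eigenvalues ⟨k, h⟩)
  else 0

/-- Spectral norm (ℓ²→ℓ² operator norm) of a real matrix: its largest singular value. -/
def specNorm {m n : ℕ} (A : Matrix (Fin m) (Fin n) ℝ) : ℝ := sval A 0

/-- `tailDelta A μ = Δ_{μ+1}(A) = sqrt (Σ_{k=μ+1}^{min(m,n)} σ_k(A)²)` (with 1-based σ's,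
so 0-based indices `μ, …, min m n - 1`). -/
def tailDelta {m n : ℕ} (A : Matrix (Fin m) (Fin n) ℝ) (μ : ℕ) : ℝ :=
  Real.sqrt (∑ k ∈ Finset.Ico μ (min m n), sval A k ^ 2)

end
lemma le_sortedDesc_zero {n : ℕ} (hn : 0 < n) (f : Fin n → ℝ) (i : Fin n) :
    f i ≤ sortedDesc f ⟨0, hn⟩ := by
  have hm := Tuple.monotone_sort (fun i => - f i)
  have h0 : (⟨0, hn⟩ : Fin n) ≤ (Tuple.sort (fun i => - f i)).symm i := by
    simp [Fin.le_def]
  have := hm h0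
  simp only [Function.comp_apply, Equiv.apply_symm_apply] at this
  simp only [sortedDesc, Function.comp_apply]
  linarith

lemma exists_sortedDesc_zero {n : ℕ} (hn : 0 < n) (f : Fin n → ℝ) :
    ∃ i, sortedDesc f ⟨0, hn⟩ = f i :=
  ⟨Tuple.sort (fun i => - f i) ⟨0, hn⟩, by simp [sortedDesc]⟩

lemma quad_eq {k n : ℕ} (B : Matrix (Fin k) (Fin n) ℝ) (x : Fin n → ℝ) :
    x ⬝ᵥ ((Bᵀ * B) *ᵥ x) = (B *ᵥ x) ⬝ᵥ (B *ᵥ x) := by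
  rw [← mulVec_mulVec, Matrix.dotProduct_mulVec, vecMul_transpose]

lemma dot_self_nonneg {n : ℕ} (x : Fin n → ℝ) : 0 ≤ x ⬝ᵥ x :=
  Finset.sum_nonneg fun i _ => mul_self_nonneg _

lemma basis_dot_self {n : ℕ} {M : Matrix (Fin n) (Fin n) ℝ} (hM : M.IsHermitian) (i : Fin n) :
    (⇑(hM.eigenvectorBasis i) : Fin n → ℝ) ⬝ᵥ ⇑(hM.eigenvectorBasis i) = 1 := by
  have h1 : ‖hM.eigenvectorBasis i‖ = 1 := hM.eigenvectorBasis.orthonormal.1 i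
  have h2 : ‖hM.eigenvectorBasis i‖ ^ 2 = 1 := by rw [h1]; norm_num
  rw [← real_inner_self_eq_norm_sq] at h2
  rw [← h2]
  simp only [PiLp.inner_apply, RCLike.inner_apply, conj_trivial, dotProduct]

lemma quad_basis {n : ℕ} {M : Matrix (Fin n) (Fin n) ℝ} (hM : M.IsHermitian) (i : Fin n) :
    (⇑(hM.eigenvectorBasis i) : Fin n → ℝ) ⬝ᵥ (M *ᵥ ⇑(hM.eigenvectorBasis i))
      = hM.eigenvalues i := by
  rw [hM.mulVec_eigenvectorBasis, dotProduct_smul, smul_eq_mul, basis_dot_self hM, mul_one]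

lemma eig_nonneg {k n : ℕ} (B : Matrix (Fin k) (Fin n) ℝ) (i : Fin n) :
    0 ≤ (Matrix.isHermitian_conjTranspose_mul_self B).eigenvalues i := by
  rw [← quad_basis (Matrix.isHermitian_conjTranspose_mul_self B) i]
  set x : Fin n → ℝ := ⇑((Matrix.isHermitian_conjTranspose_mul_self B).eigenvectorBasis i) with hx
  rw [Matrix.conjTranspose_eq_transpose_of_trivial, quad_eq]
  exact dot_self_nonneg _

lemma sortedDesc_zero_nonneg {k n : ℕ} (hn : 0 < n) (B : Matrix (Fin k) (Fin n) ℝ) :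
    0 ≤ sortedDesc (Matrix.isHermitian_conjTranspose_mul_self B).eigenvalues ⟨0, hn⟩ := by
  obtain ⟨i, hi⟩ := exists_sortedDesc_zero hn (Matrix.isHermitian_conjTranspose_mul_self B).eigenvalues
  rw [hi]; exact eig_nonneg B i

lemma specNorm_nonneg {k n : ℕ} (B : Matrix (Fin k) (Fin n) ℝ) : 0 ≤ specNorm B := by
  unfold specNorm sval
  split
  · exact Real.sqrt_nonneg _
  · exact le_refl _

lemma sq_specNorm {k n : ℕ} (hn : 0 < n) (B : Matrix (Fin k) (Fin n) ℝ) :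
    specNorm B ^ 2 = sortedDesc (Matrix.isHermitian_conjTranspose_mul_self B).eigenvalues ⟨0, hn⟩ := by
  unfold specNorm sval
  rw [dif_pos hn, Real.sq_sqrt (sortedDesc_zero_nonneg hn B)]

lemma spectral_real {k n : ℕ} (B : Matrix (Fin k) (Fin n) ℝ) :
    Bᵀ * B = ((Matrix.isHermitian_conjTranspose_mul_self B).eigenvectorUnitary : Matrix (Fin n) (Fin n) ℝ)
      * Matrix.diagonal (Matrix.isHermitian_conjTranspose_mul_self B).eigenvalues
      * ((Matrix.isHermitian_conjTranspose_mul_self B).eigenvectorUnitary : Matrix (Fin n) (Fin n) ℝ)ᵀ := by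
  have h := (Matrix.isHermitian_conjTranspose_mul_self B).spectral_theorem
  rw [show Bᵀ = Bᴴ from (Matrix.conjTranspose_eq_transpose_of_trivial B).symm]
  refine h.trans ?_
  rw [Unitary.conjStarAlgAut_apply, Matrix.star_eq_conjTranspose]
  congr 1

lemma quad_le {k n : ℕ} (hn : 0 < n) (B : Matrix (Fin k) (Fin n) ℝ) (x : Fin n → ℝ) :
    (B *ᵥ x) ⬝ᵥ (B *ᵥ x) ≤ specNorm B ^ 2 * (x ⬝ᵥ x) := by
  set W : Matrix (Fin n) (Fin n) ℝ :=
    ((Matrix.isHermitian_conjTranspose_mul_self B).eigenvectorUnitary : Matrix (Fin n) (Fin n) ℝ) with hW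
  set e := (Matrix.isHermitian_conjTranspose_mul_self B).eigenvalues with he
  have hWW : W * Wᵀ = 1 := by
    have := (Matrix.mem_unitaryGroup_iff).mp
      (Matrix.isHermitian_conjTranspose_mul_self B).eigenvectorUnitary.2
    rw [show Wᵀ = Wᴴ from (Matrix.conjTranspose_eq_transpose_of_trivial W).symm]
    rw [Matrix.star_eq_conjTranspose] at this
    exact this
  set y : Fin n → ℝ := Wᵀ *ᵥ x with hy
  have hyy : y ⬝ᵥ y = x ⬝ᵥ x := by
    rw [hy, ← quad_eq Wᵀ x, Matrix.transpose_transpose, hWW, Matrix.one_mulVec]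
  have hlhs : (B *ᵥ x) ⬝ᵥ (B *ᵥ x) = y ⬝ᵥ (Matrix.diagonal e *ᵥ y) := by
    rw [← quad_eq, spectral_real B, ← he, ← hW, ← Matrix.mulVec_mulVec, ← Matrix.mulVec_mulVec,
      Matrix.dotProduct_mulVec x W, ← Matrix.mulVec_transpose, hy]
  rw [hlhs, sq_specNorm hn B, ← he, ← hyy]
  have : y ⬝ᵥ (Matrix.diagonal e *ᵥ y) = ∑ i, e i * y i ^ 2 := by
    simp only [dotProduct, Matrix.mulVec_diagonal]
    exact Finset.sum_congr rfl (fun i _ => by ring)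
  rw [this, dotProduct, Finset.mul_sum]
  apply Finset.sum_le_sum
  intro i _
  have h1 : e i ≤ sortedDesc e ⟨0, hn⟩ := le_sortedDesc_zero hn e i
  have h2 : (0:ℝ) ≤ y i * y i := mul_self_nonneg _
  nlinarith

lemma exists_attain {k n : ℕ} (hn : 0 < n) (B : Matrix (Fin k) (Fin n) ℝ) :
    ∃ x : Fin n → ℝ, x ⬝ᵥ x = 1 ∧ (B *ᵥ x) ⬝ᵥ (B *ᵥ x) = specNorm B ^ 2 := by
  obtain ⟨i, hi⟩ := exists_sortedDesc_zero hn (Matrix.isHermitian_conjTranspose_mul_self B).eigenvalues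
  refine ⟨⇑((Matrix.isHermitian_conjTranspose_mul_self B).eigenvectorBasis i), basis_dot_self _ i, ?_⟩
  set x : Fin n → ℝ := ⇑((Matrix.isHermitian_conjTranspose_mul_self B).eigenvectorBasis i) with hx
  have h := quad_basis (Matrix.isHermitian_conjTranspose_mul_self B) i
  rw [← hx] at h
  rw [← quad_eq, show Bᵀ = Bᴴ from (Matrix.conjTranspose_eq_transpose_of_trivial B).symm, h,
    sq_specNorm hn B, hi]

lemma one_add_sq_le_sq_one_add {x : ℝ} (hx : 0 ≤ x) : 1 + x ^ 2 ≤ (1 + x) ^ 2 := by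
  nlinarith

lemma le_of_sq_le_sq' {s t : ℝ} (hs : 0 ≤ s) (ht : 0 ≤ t) (h : s ^ 2 ≤ t ^ 2) : s ≤ t := by
  nlinarith

lemma specNorm_mul_le {p q r : ℕ} (hq : 0 < q) (hr : 0 < r)
    (X : Matrix (Fin p) (Fin q) ℝ) (Y : Matrix (Fin q) (Fin r) ℝ) :
    specNorm (X * Y) ≤ specNorm X * specNorm Y := by
  obtain ⟨x, hx1, hx2⟩ := exists_attain hr (X * Y)
  refine le_of_sq_le_sq' (specNorm_nonneg _)
    (mul_nonneg (specNorm_nonneg _) (specNorm_nonneg _)) ?_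
  rw [← hx2, ← Matrix.mulVec_mulVec]
  calc (X *ᵥ (Y *ᵥ x)) ⬝ᵥ (X *ᵥ (Y *ᵥ x)) ≤ specNorm X ^ 2 * ((Y *ᵥ x) ⬝ᵥ (Y *ᵥ x)) :=
        quad_le hq X _
    _ ≤ specNorm X ^ 2 * (specNorm Y ^ 2 * (x ⬝ᵥ x)) := by
        have := quad_le hr Y x
        nlinarith [sq_nonneg (specNorm X)]
    _ = (specNorm X * specNorm Y) ^ 2 := by rw [hx1]; ring

lemma row_sq_le {p q : ℕ} (hq : 0 < q) (C : Matrix (Fin p) (Fin q) ℝ) (i : Fin p) :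
    ∑ j, C i j ^ 2 ≤ specNorm C ^ 2 := by
  set r : Fin q → ℝ := fun j => C i j with hr
  have hrr : r ⬝ᵥ r = ∑ j, C i j ^ 2 := by
    simp [dotProduct, hr, pow_two]
  have h1 : (C *ᵥ r) i = r ⬝ᵥ r := by
    simp [Matrix.mulVec, dotProduct, hr]
  have h2 : ((C *ᵥ r) i) ^ 2 ≤ (C *ᵥ r) ⬝ᵥ (C *ᵥ r) := by
    rw [dotProduct]
    have := Finset.single_le_sum (f := fun k => (C *ᵥ r) k * (C *ᵥ r) k)
      (fun k _ => mul_self_nonneg _) (Finset.mem_univ i)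
    rw [pow_two]; exact this
  have h3 := quad_le hq C r
  rcases eq_or_lt_of_le (dot_self_nonneg r) with h0 | h0
  · rw [← hrr, ← h0]; exact sq_nonneg _
  · rw [← hrr]
    nlinarith

lemma sum_eq_sum_castLE {n μ : ℕ} (hμn : μ ≤ n) (f : Fin n → ℝ)
    (hf : ∀ j : Fin n, ¬ (j : ℕ) < μ → f j = 0) :
    ∑ j, f j = ∑ k : Fin μ, f (Fin.castLE hμn k) := by
  have h1 : ∑ j ∈ Finset.univ.map (Fin.castLEEmb hμn), f j = ∑ j, f j := by
    refine Finset.sum_subset (Finset.subset_univ _) ?_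
    intro j _ hj
    refine hf j fun hlt => hj ?_
    simp only [Finset.mem_map, Finset.mem_univ, true_and]
    exact ⟨⟨(j : ℕ), hlt⟩, by ext; rfl⟩
  rw [← h1, Finset.sum_map]
  rfl

lemma sum_castLE_le {n μ : ℕ} (hμn : μ ≤ n) (g : Fin n → ℝ) (hg : ∀ j, 0 ≤ g j) :
    ∑ k : Fin μ, g (Fin.castLE hμn k) ≤ ∑ j, g j := by
  have h1 : ∑ k : Fin μ, g (Fin.castLE hμn k)
      = ∑ j ∈ Finset.univ.map (Fin.castLEEmb hμn), g j := by
    rw [Finset.sum_map]; rfl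
  rw [h1]
  exact Finset.sum_le_sum_of_subset_of_nonneg (Finset.subset_univ _) fun j _ _ => hg j

lemma pad_mulVec {ℓ' μ n : ℕ} (hμn : μ ≤ n) (G : Matrix (Fin ℓ') (Fin μ) ℝ) (z : Fin n → ℝ) :
    (Matrix.of fun (i : Fin ℓ') (j : Fin n) =>
      if h : (j : ℕ) < μ then G i ⟨(j : ℕ), h⟩ else 0) *ᵥ z
      = G *ᵥ (fun k => z (Fin.castLE hμn k)) := by
  funext i
  simp only [Matrix.mulVec, dotProduct]
  rw [sum_eq_sum_castLE hμn (f := fun j => (Matrix.of fun (i : Fin ℓ') (j : Fin n) =>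
      if h : (j : ℕ) < μ then G i ⟨(j : ℕ), h⟩ else 0) i j * z j)
    (fun j hj => by simp [Matrix.of_apply, dif_neg hj])]
  refine Finset.sum_congr rfl fun k _ => ?_
  have hk : ((Fin.castLE hμn k : Fin n) : ℕ) < μ := k.isLt
  simp only [Matrix.of_apply, dif_pos hk]
  rfl

lemma specNorm_pad_mul {ℓ' μ n : ℕ} (hμ : 0 < μ) (hμn : μ ≤ n)
    (G : Matrix (Fin ℓ') (Fin μ) ℝ) (V : Matrix (Fin n) (Fin n) ℝ) (hV : Vᵀ * V = 1) :
    specNorm ((Matrix.of fun (i : Fin ℓ') (j : Fin n) =>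
      if h : (j : ℕ) < μ then G i ⟨(j : ℕ), h⟩ else 0) * Vᵀ) = specNorm G := by
  have hn : 0 < n := lt_of_lt_of_le hμ hμn
  have hVV : V * Vᵀ = 1 := mul_eq_one_comm.mp hV
  set P : Matrix (Fin ℓ') (Fin n) ℝ := Matrix.of fun (i : Fin ℓ') (j : Fin n) =>
      if h : (j : ℕ) < μ then G i ⟨(j : ℕ), h⟩ else 0 with hP
  apply le_antisymm
  · obtain ⟨x, hx1, hx2⟩ := exists_attain hn (P * Vᵀ)
    refine le_of_sq_le_sq' (specNorm_nonneg _) (specNorm_nonneg _) ?_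
    rw [← hx2]
    set y : Fin n → ℝ := Vᵀ *ᵥ x with hy
    have hyy : y ⬝ᵥ y = 1 := by
      rw [hy, ← quad_eq Vᵀ x, Matrix.transpose_transpose, hVV, Matrix.one_mulVec, hx1]
    have hFx : (P * Vᵀ) *ᵥ x = G *ᵥ (fun k => y (Fin.castLE hμn k)) := by
      rw [← Matrix.mulVec_mulVec, ← hy, hP, pad_mulVec hμn]
    rw [hFx]
    calc (G *ᵥ fun k => y (Fin.castLE hμn k)) ⬝ᵥ (G *ᵥ fun k => y (Fin.castLE hμn k))
        ≤ specNorm G ^ 2 * ((fun k => y (Fin.castLE hμn k)) ⬝ᵥ (fun k => y (Fin.castLE hμn k))) :=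
          quad_le hμ G _
      _ ≤ specNorm G ^ 2 * (y ⬝ᵥ y) := by
          have hle : (fun k => y (Fin.castLE hμn k)) ⬝ᵥ (fun k => y (Fin.castLE hμn k)) ≤ y ⬝ᵥ y :=
            sum_castLE_le hμn (fun j => y j * y j) (fun j => mul_self_nonneg _)
          nlinarith [sq_nonneg (specNorm G)]
      _ = specNorm G ^ 2 := by rw [hyy, mul_one]
  · obtain ⟨y, hy1, hy2⟩ := exists_attain hμ G
    refine le_of_sq_le_sq' (specNorm_nonneg _) (specNorm_nonneg _) ?_
    set z : Fin n → ℝ := fun j => if h : (j : ℕ) < μ then y ⟨(j : ℕ), h⟩ else 0 with hz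
    set x : Fin n → ℝ := V *ᵥ z with hx
    have hzz : z ⬝ᵥ z = 1 := by
      rw [dotProduct,
        sum_eq_sum_castLE hμn (f := fun j => z j * z j)
          (fun j hj => by simp [hz, dif_neg hj])]
      rw [← hy1, dotProduct]
      refine Finset.sum_congr rfl fun k _ => ?_
      have hk : ((Fin.castLE hμn k : Fin n) : ℕ) < μ := k.isLt
      simp only [hz, dif_pos hk]
      rfl
    have hxx : x ⬝ᵥ x = 1 := by
      rw [hx, ← quad_eq V z, hV, Matrix.one_mulVec, hzz]
    have hFx : (P * Vᵀ) *ᵥ x = G *ᵥ y := by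
      rw [hx, Matrix.mulVec_mulVec, Matrix.mul_assoc, hV, Matrix.mul_one, hP,
        pad_mulVec hμn]
      have hzy : (fun k => z (Fin.castLE hμn k)) = y := by
        funext k
        have hk : ((Fin.castLE hμn k : Fin n) : ℕ) < μ := k.isLt
        simp only [hz, dif_pos hk]
        rfl
      rw [hzy]
    have := quad_le hn (P * Vᵀ) x
    rw [hFx, hy2, hxx, mul_one] at this
    exact this

lemma sum_sq_eq_trace {p q : ℕ} (X : Matrix (Fin p) (Fin q) ℝ) :
    ∑ i, ∑ j, X i j ^ 2 = (X * Xᵀ).trace := by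
  simp [Matrix.trace, Matrix.diag, Matrix.mul_apply, pow_two]

lemma frob_sq_conj {p q : ℕ} (U : Matrix (Fin p) (Fin p) ℝ) (V : Matrix (Fin q) (Fin q) ℝ)
    (hU : Uᵀ * U = 1) (hV : Vᵀ * V = 1) (E : Matrix (Fin p) (Fin q) ℝ) :
    ∑ i, ∑ j, (U * E * Vᵀ) i j ^ 2 = ∑ i, ∑ j, E i j ^ 2 := by
  rw [sum_sq_eq_trace, sum_sq_eq_trace]
  have h1 : (U * E * Vᵀ) * (U * E * Vᵀ)ᵀ = U * (E * Eᵀ) * Uᵀ := by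
    rw [Matrix.transpose_mul, Matrix.transpose_mul, Matrix.transpose_transpose]
    calc U * E * Vᵀ * (Vᵀᵀ * (Eᵀ * Uᵀ)) = U * E * (Vᵀ * V) * (Eᵀ * Uᵀ) := by
          rw [Matrix.transpose_transpose]
          simp only [Matrix.mul_assoc]
      _ = U * (E * Eᵀ) * Uᵀ := by rw [hV, Matrix.mul_one]; simp only [Matrix.mul_assoc]
  rw [h1, Matrix.trace_mul_comm, ← Matrix.mul_assoc, hU, Matrix.one_mul]

/-- Given an SVD `A = UΣVᵀ`, with `VᵀΩ = [H; R₂]`, a right inverse `G` of `H`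
(`HG = I_μ`) and `F = [G | 0]·Vᵀ`, one has `‖F‖₂ = ‖G‖₂` and
`‖AΩF − A‖_F ≤ (1 + ‖R₂‖₂‖G‖₂)·Δ_{μ+1}(A)`. -/
theorem svd_sketch_bound {m n μ ℓ : ℕ} (hμ1 : 1 ≤ μ) (hμn : μ < n) (hμℓ : μ ≤ ℓ)
    (A : Matrix (Fin m) (Fin n) ℝ)
    (U : Matrix (Fin m) (Fin m) ℝ) (V : Matrix (Fin n) (Fin n) ℝ)
    (S : Matrix (Fin m) (Fin n) ℝ)
    (hU : Uᵀ * U = 1) (hV : Vᵀ * V = 1)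
    (hS : ∀ (i : Fin m) (j : Fin n), S i j = if (i : ℕ) = (j : ℕ) then sval A (i : ℕ) else 0)
    (hA : A = U * S * Vᵀ)
    (Ω : Matrix (Fin n) (Fin ℓ) ℝ)
    (H : Matrix (Fin μ) (Fin ℓ) ℝ)
    (R₂ : Matrix (Fin (n - μ)) (Fin ℓ) ℝ)
    (hH : ∀ (i : Fin μ) (j : Fin ℓ), H i j = (Vᵀ * Ω) (Fin.castLE hμn.le i) j)
    (hR₂ : ∀ (i : Fin (n - μ)) (j : Fin ℓ),
      R₂ i j = (Vᵀ * Ω) ⟨μ + (i : ℕ), by have := i.isLt; omega⟩ j)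
    (G : Matrix (Fin ℓ) (Fin μ) ℝ) (hG : H * G = 1)
    (F : Matrix (Fin ℓ) (Fin n) ℝ)
    (hF : F = (Matrix.of fun (i : Fin ℓ) (j : Fin n) =>
      if h : (j : ℕ) < μ then G i ⟨(j : ℕ), h⟩ else 0) * Vᵀ) :
    specNorm F = specNorm G ∧
      frobNorm (A * Ω * F - A) ≤ (1 + specNorm R₂ * specNorm G) * tailDelta A μ := by
  have hn : 0 < n := lt_of_le_of_lt (Nat.zero_le μ) hμn
  have hμ0 : 0 < μ := hμ1
  have hℓ : 0 < ℓ := lt_of_lt_of_le hμ1 hμℓ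
  constructor
  · rw [hF]; exact specNorm_pad_mul hμ0 hμn.le G V hV
  · -- Frobenius bound
    set P : Matrix (Fin ℓ) (Fin n) ℝ := Matrix.of fun (i : Fin ℓ) (j : Fin n) =>
        if h : (j : ℕ) < μ then G i ⟨(j : ℕ), h⟩ else 0 with hP
    set K : Matrix (Fin n) (Fin ℓ) ℝ := Vᵀ * Ω with hK
    set C : Matrix (Fin (n - μ)) (Fin μ) ℝ := R₂ * G with hC
    set s : ℝ := specNorm R₂ * specNorm G with hs
    have hs0 : 0 ≤ s := mul_nonneg (specNorm_nonneg _) (specNorm_nonneg _)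
    have hCs : specNorm C ≤ s := specNorm_mul_le hℓ hμ0 R₂ G
    set E : Matrix (Fin m) (Fin n) ℝ := S * (K * P) - S with hE
    have hD : A * Ω * F - A = U * E * Vᵀ := by
      have h1 : A * Ω * F = U * (S * (K * P)) * Vᵀ := by
        rw [hA, hF, hK, hP]
        simp only [Matrix.mul_assoc]
      rw [h1, hA, hE, Matrix.mul_sub, Matrix.sub_mul]
    -- entry lemmas
    have hKG1 : ∀ (a : Fin μ) (b : Fin μ),
        (K * G) (Fin.castLE hμn.le a) b = (1 : Matrix (Fin μ) (Fin μ) ℝ) a b := by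
      intro a b
      rw [← hG]
      simp only [Matrix.mul_apply]
      exact Finset.sum_congr rfl fun t _ => by rw [← hH a t]
    have hKG2 : ∀ (a : Fin (n - μ)) (b : Fin μ),
        (K * G) ⟨μ + (a : ℕ), by have := a.isLt; omega⟩ b = C a b := by
      intro a b
      rw [hC]
      simp only [Matrix.mul_apply]
      exact Finset.sum_congr rfl fun t _ => by rw [← hR₂ a t]
    have hM0 : ∀ (a : Fin n) (j : Fin n), ¬((j : ℕ) < μ) → (K * P) a j = 0 := by
      intro a j hj
      simp only [Matrix.mul_apply]
      apply Finset.sum_eq_zero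
      intro t _
      simp [hP, Matrix.of_apply, dif_neg hj]
    have hM1 : ∀ (a : Fin n) (j : Fin n) (hj : (j : ℕ) < μ),
        (K * P) a j = (K * G) a ⟨(j : ℕ), hj⟩ := by
      intro a j hj
      simp only [Matrix.mul_apply]
      refine Finset.sum_congr rfl fun t _ => ?_
      simp [hP, Matrix.of_apply, dif_pos hj]
    have hSM : ∀ (i : Fin m) (j : Fin n), (S * (K * P)) i j
        = if h : (i : ℕ) < n then sval A (i : ℕ) * (K * P) ⟨(i : ℕ), h⟩ j else 0 := by
      intro i j
      rw [Matrix.mul_apply]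
      by_cases h : (i : ℕ) < n
      · rw [dif_pos h]
        rw [Finset.sum_eq_single (⟨(i : ℕ), h⟩ : Fin n)]
        · rw [hS]; simp
        · intro b _ hb
          rw [hS, if_neg, zero_mul]
          intro hib
          exact hb (Fin.ext hib.symm)
        · intro habs; exact absurd (Finset.mem_univ _) habs
      · rw [dif_neg h]
        apply Finset.sum_eq_zero
        intro b _
        rw [hS, if_neg, zero_mul]
        have := b.isLt
        omega
    -- per-row bounds
    have hrowle : ∀ i : Fin m, (i : ℕ) < n → μ ≤ (i : ℕ) →
        ∑ j, E i j ^ 2 ≤ (1 + s ^ 2) * sval A (i : ℕ) ^ 2 := by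
      intro i hi2 hi1
      set i' : Fin n := ⟨(i : ℕ), hi2⟩ with hi'
      set i'' : Fin (n - μ) := ⟨(i : ℕ) - μ, by omega⟩ with hi''
      have hEij : ∀ j : Fin n, E i j = if hj : (j : ℕ) < μ
          then sval A (i : ℕ) * C i'' ⟨(j : ℕ), hj⟩
          else (if (i : ℕ) = (j : ℕ) then -(sval A (i : ℕ)) else 0) := by
        intro j
        have hEdef : E i j = (S * (K * P)) i j - S i j := by rw [hE]; rfl
        rw [hEdef, hSM i j, dif_pos hi2, hS i j]
        by_cases hj : (j : ℕ) < μ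
        · rw [dif_pos hj, hM1 _ j hj]
          have hmk : (⟨(i : ℕ), hi2⟩ : Fin n)
              = ⟨μ + (i'' : ℕ), by have := i''.isLt; omega⟩ := by
            apply Fin.ext
            simp [hi'']
            omega
          rw [hmk, hKG2 i'' ⟨(j : ℕ), hj⟩, if_neg (by omega)]
          ring
        · rw [dif_neg hj, hM0 _ j hj, mul_zero, zero_sub]
          by_cases hij : (i : ℕ) = (j : ℕ) <;> simp [hij]
      have key : ∑ j, E i j ^ 2
          = (∑ k : Fin μ, (sval A (i : ℕ) * C i'' k) ^ 2) + sval A (i : ℕ) ^ 2 := by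
        have hsplit : ∀ j : Fin n, E i j ^ 2
            = (if hj : (j : ℕ) < μ then (sval A (i : ℕ) * C i'' ⟨(j : ℕ), hj⟩) ^ 2 else 0)
              + (if (i : ℕ) = (j : ℕ) then sval A (i : ℕ) ^ 2 else 0) := by
          intro j
          rw [hEij j]
          by_cases hj : (j : ℕ) < μ
          · rw [dif_pos hj, dif_pos hj, if_neg (by omega), add_zero]
          · rw [dif_neg hj, dif_neg hj, zero_add]
            by_cases hij : (i : ℕ) = (j : ℕ) <;> simp [hij]
        rw [Finset.sum_congr rfl (fun j _ => hsplit j), Finset.sum_add_distrib]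
        congr 1
        · rw [sum_eq_sum_castLE hμn.le _ (fun j hj => dif_neg hj)]
          refine Finset.sum_congr rfl fun k _ => ?_
          have hk : ((Fin.castLE hμn.le k : Fin n) : ℕ) < μ := k.isLt
          rw [dif_pos hk]
          rfl
        · rw [Finset.sum_eq_single i']
          · rw [if_pos rfl]
          · intro b _ hb
            rw [if_neg]
            intro hib
            exact hb (Fin.ext hib.symm)
          · intro habs; exact absurd (Finset.mem_univ _) habs
      rw [key]
      have hsum : ∑ k : Fin μ, (sval A (i : ℕ) * C i'' k) ^ 2
          = sval A (i : ℕ) ^ 2 * ∑ k, C i'' k ^ 2 := by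
        rw [Finset.mul_sum]
        exact Finset.sum_congr rfl fun k _ => by ring
      have hrow := row_sq_le hμ0 C i''
      have hC2 : specNorm C ^ 2 ≤ s ^ 2 := by nlinarith [specNorm_nonneg C]
      have hsv : 0 ≤ sval A (i : ℕ) ^ 2 := sq_nonneg _
      rw [hsum]
      nlinarith
    have hrow0 : ∀ i : Fin m, ¬((i : ℕ) < n ∧ μ ≤ (i : ℕ)) → ∑ j, E i j ^ 2 = 0 := by
      intro i hbad
      apply Finset.sum_eq_zero
      intro j _
      have hEdef : E i j = (S * (K * P)) i j - S i j := by rw [hE]; rfl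
      by_cases hi2 : (i : ℕ) < n
      · have hiμ : (i : ℕ) < μ := by omega
        rw [hEdef, hSM i j, dif_pos hi2, hS i j]
        by_cases hj : (j : ℕ) < μ
        · rw [hM1 _ j hj]
          have hcast : (⟨(i : ℕ), hi2⟩ : Fin n) = Fin.castLE hμn.le ⟨(i : ℕ), hiμ⟩ :=
            Fin.ext rfl
          rw [hcast, hKG1 ⟨(i : ℕ), hiμ⟩ ⟨(j : ℕ), hj⟩, Matrix.one_apply]
          simp only [Fin.mk.injEq]
          by_cases hij : (i : ℕ) = (j : ℕ) <;> simp [hij]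
        · rw [hM0 _ j hj, if_neg (by omega), mul_zero, sub_zero]
          simp
      · rw [hEdef, hSM i j, dif_neg hi2, hS i j, if_neg (by have := j.isLt; omega), sub_zero]
        simp
    -- total bound
    set t2 : ℝ := ∑ k ∈ Finset.Ico μ (min m n), sval A k ^ 2 with ht2def
    have ht2 : 0 ≤ t2 := Finset.sum_nonneg fun k _ => sq_nonneg _
    have hT : ∑ i, ∑ j, E i j ^ 2 ≤ (1 + s ^ 2) * t2 := by
      have step1 : ∑ i : Fin m, ∑ j, E i j ^ 2
          ≤ ∑ i : Fin m, (if μ ≤ (i : ℕ) ∧ (i : ℕ) < n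
              then (1 + s ^ 2) * sval A (i : ℕ) ^ 2 else 0) := by
        refine Finset.sum_le_sum fun i _ => ?_
        by_cases hcond : μ ≤ (i : ℕ) ∧ (i : ℕ) < n
        · rw [if_pos hcond]
          exact hrowle i hcond.2 hcond.1
        · rw [if_neg hcond, hrow0 i (by tauto)]
      have step2 : ∑ i : Fin m, (if μ ≤ (i : ℕ) ∧ (i : ℕ) < n
              then (1 + s ^ 2) * sval A (i : ℕ) ^ 2 else 0)
          = (1 + s ^ 2) * ∑ i : Fin m, (if μ ≤ (i : ℕ) ∧ (i : ℕ) < n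
              then sval A (i : ℕ) ^ 2 else 0) := by
        rw [Finset.mul_sum]
        exact Finset.sum_congr rfl fun i _ => by
          by_cases hcond : μ ≤ (i : ℕ) ∧ (i : ℕ) < n <;> simp [hcond]
      have step3 : ∑ i : Fin m, (if μ ≤ (i : ℕ) ∧ (i : ℕ) < n
              then sval A (i : ℕ) ^ 2 else 0) = t2 := by
        rw [Fin.sum_univ_eq_sum_range
          (fun k => if μ ≤ k ∧ k < n then sval A k ^ 2 else 0) m]
        rw [ht2def, ← Finset.sum_filter]
        congr 1
        ext k
        simp only [Finset.mem_filter, Finset.mem_range, Finset.mem_Ico, lt_min_iff]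
        omega
      calc ∑ i : Fin m, ∑ j, E i j ^ 2 ≤ _ := step1
        _ = _ := step2
        _ = (1 + s ^ 2) * t2 := by rw [step3]
    rw [hD]
    simp only [frobNorm]
    rw [frob_sq_conj U V hU hV E]
    have htd : tailDelta A μ = Real.sqrt t2 := by
      simp only [tailDelta, ht2def]
    have hfinal : ∑ i, ∑ j, E i j ^ 2 ≤ (1 + s) ^ 2 * t2 :=
      hT.trans (mul_le_mul_of_nonneg_right (one_add_sq_le_sq_one_add hs0) ht2)
    calc Real.sqrt (∑ i, ∑ j, E i j ^ 2) ≤ Real.sqrt ((1 + s) ^ 2 * t2) :=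
          Real.sqrt_le_sqrt hfinal
      _ = (1 + s) * Real.sqrt t2 := by
          rw [Real.sqrt_mul (sq_nonneg _), Real.sqrt_sq (add_nonneg zero_le_one hs0)]
      _ = (1 + s) * tailDelta A μ := by rw [htd]
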